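/- Let B ∈ ℂ^{m×n}, W ∈ ℂ^{n×m}, let k be a natural number with k = ind(WB), let H be the Moore–Penrose inverse of B, let Z be a minimal rank W-weighted right weak Drazin inverse of B, and let Y₁ ∈ ℂ^{n×m}. Then the following are equivalent: (i) Y₁ = W·Z·W·B·H; (ii) Y₁·B·Y₁ = Y₁, B·Y₁·B = B·W·Z·W·B, Y₁·B = W·Z·W·B and (W·B)^{k+1}·Y₁ = (W·B)^{k+1}·H; (iii) Y₁·B·Y₁ = Y₁, Y₁·B = W·Z·W·B and B·Y₁ = B·Y₁·B·H; (iv) Y₁·B = W·Z·W·B, B·Y₁ = B·Y₁·B·H and Y₁ = Y₁·B·H; (v) Y₁·B·Y₁ = Y₁, Y₁·B = W·Z·W·B, (W·B)^{k+1}·Y₁ = (W·B)^{k+1}·H and Z·Y₁ = Z·H; (vi) Y₁ = Y₁·B·H, Y₁·B = W·Z·W·B and H·Z·Y₁ = H·Z·H. -/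
import Mathlib


open Matrix

/-- The index of a square complex matrix: the least `j` with `rank (M^j) = rank (M^(j+1))`. -/
noncomputable def matIndex {p : ℕ} (M : Matrix (Fin p) (Fin p) ℂ) : ℕ :=
  sInf {j : ℕ | (M ^ j).rank = (M ^ (j + 1)).rank}

/-- The column space of a complex matrix: the range of `v ↦ M *ᵥ v`. -/
noncomputable def colSpace {a b : ℕ} (M : Matrix (Fin a) (Fin b) ℂ) :
    Submodule ℂ (Fin a → ℂ) :=
  LinearMap.range M.mulVecLin

/-- The null space of a complex matrix: the kernel of `v ↦ M *ᵥ v`. -/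
noncomputable def nullSpace {a b : ℕ} (M : Matrix (Fin a) (Fin b) ℂ) :
    Submodule ℂ (Fin b → ℂ) :=
  LinearMap.ker M.mulVecLin

private lemma matrix_eq_zero_of_forall_mulVec {a b : ℕ} {M : Matrix (Fin a) (Fin b) ℂ}
    (h : ∀ v, M *ᵥ v = 0) : M = 0 := by
  ext i j
  have := congrFun (h (Pi.single j 1)) i
  simpa using this

private lemma mul_eq_zero_of_ker_le {a b c p : ℕ} {K : Matrix (Fin a) (Fin b) ℂ}
    {C : Matrix (Fin c) (Fin b) ℂ}
    (h : LinearMap.ker K.mulVecLin ≤ LinearMap.ker C.mulVecLin)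
    (M : Matrix (Fin b) (Fin p) ℂ) (hKM : K * M = 0) : C * M = 0 := by
  apply matrix_eq_zero_of_forall_mulVec
  intro v
  have hm : M *ᵥ v ∈ LinearMap.ker K.mulVecLin := by
    simp only [LinearMap.mem_ker, mulVecLin_apply, mulVec_mulVec, hKM, zero_mulVec]
  have h2 := h hm
  simp only [LinearMap.mem_ker, mulVecLin_apply] at h2
  rw [← mulVec_mulVec, h2]

private lemma ker_eq_of_le_of_rank_eq {a b c : ℕ} {M : Matrix (Fin a) (Fin c) ℂ}
    {N : Matrix (Fin b) (Fin c) ℂ}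
    (hle : LinearMap.ker M.mulVecLin ≤ LinearMap.ker N.mulVecLin)
    (hr : M.rank = N.rank) :
    LinearMap.ker M.mulVecLin = LinearMap.ker N.mulVecLin := by
  apply Submodule.eq_of_le_of_finrank_eq hle
  have h1 := LinearMap.finrank_range_add_finrank_ker M.mulVecLin
  have h2 := LinearMap.finrank_range_add_finrank_ker N.mulVecLin
  have hr' : Module.finrank ℂ (LinearMap.range M.mulVecLin) =
      Module.finrank ℂ (LinearMap.range N.mulVecLin) := hr
  omega

private lemma rank_pow_index {p : ℕ} (A : Matrix (Fin p) (Fin p) ℂ) {k : ℕ}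
    (hk : k = matIndex A) : (A ^ k).rank = (A ^ (k + 1)).rank := by
  have hne : {j : ℕ | (A ^ j).rank = (A ^ (j + 1)).rank}.Nonempty := by
    by_contra h
    have h' : ∀ j : ℕ, (A ^ j).rank ≠ (A ^ (j + 1)).rank := fun j hj => h ⟨j, hj⟩
    have hlt : ∀ j : ℕ, (A ^ (j + 1)).rank < (A ^ j).rank := by
      intro j
      have hle : (A ^ (j + 1)).rank ≤ (A ^ j).rank := by
        rw [pow_succ]; exact Matrix.rank_mul_le_left _ _
      exact lt_of_le_of_ne hle (Ne.symm (h' j))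
    have key : ∀ j : ℕ, (A ^ j).rank + j ≤ (A ^ 0).rank := by
      intro j; induction j with
      | zero => simp
      | succ j ih => have := hlt j; omega
    have := key ((A ^ 0).rank + 1); omega
  have := Nat.sInf_mem hne
  rw [hk]
  exact this

private lemma W_pow_comm {m n : ℕ} (W : Matrix (Fin n) (Fin m) ℂ) (B : Matrix (Fin m) (Fin n) ℂ) :
    ∀ j : ℕ, W * (B * W) ^ j = (W * B) ^ j * W
  | 0 => by simp
  | j + 1 => by
    rw [pow_succ, pow_succ, ← Matrix.mul_assoc, W_pow_comm W B j,
      Matrix.mul_assoc, Matrix.mul_assoc, ← Matrix.mul_assoc W B W]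

/-- **Theorem 3.4.** Characterizations of the W-weighted weak DMP inverse `W·Z·W·B·H`. -/
theorem weighted_weak_DMP_characterizations {m n : ℕ}
    (B : Matrix (Fin m) (Fin n) ℂ) (W : Matrix (Fin n) (Fin m) ℂ)
    (k : ℕ) (hk : k = matIndex (W * B))
    (H : Matrix (Fin n) (Fin m) ℂ)
    (hH1 : B * H * B = B) (hH2 : H * B * H = H)
    (hH3 : (B * H)ᴴ = B * H) (hH4 : (H * B)ᴴ = H * B)
    (Z : Matrix (Fin m) (Fin n) ℂ)
    (hZ1 : W * (B * W) ^ (k + 1) * Z = (W * B) ^ k)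
    (hZ2 : Z.rank = ((W * B) ^ k).rank)
    (Y₁ : Matrix (Fin n) (Fin m) ℂ) :
    [ Y₁ = W * Z * W * B * H,
      Y₁ * B * Y₁ = Y₁ ∧ B * Y₁ * B = B * W * Z * W * B ∧ Y₁ * B = W * Z * W * B ∧
        (W * B) ^ (k + 1) * Y₁ = (W * B) ^ (k + 1) * H,
      Y₁ * B * Y₁ = Y₁ ∧ Y₁ * B = W * Z * W * B ∧ B * Y₁ = B * Y₁ * B * H,
      Y₁ * B = W * Z * W * B ∧ B * Y₁ = B * Y₁ * B * H ∧ Y₁ = Y₁ * B * H,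
      Y₁ * B * Y₁ = Y₁ ∧ Y₁ * B = W * Z * W * B ∧
        (W * B) ^ (k + 1) * Y₁ = (W * B) ^ (k + 1) * H ∧ Z * Y₁ = Z * H,
      Y₁ = Y₁ * B * H ∧ Y₁ * B = W * Z * W * B ∧ H * Z * Y₁ = H * Z * H ].TFAE := by
  -- notation: A = W*B (square, n×n)
  -- F0 : (W*B)^(k+1) * (W*Z) = (W*B)^k
  have F0 : (W * B) ^ (k + 1) * (W * Z) = (W * B) ^ k := by
    rw [← Matrix.mul_assoc, ← W_pow_comm W B (k + 1)]
    exact hZ1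
  -- kernel facts
  have hk1 : LinearMap.ker ((W * B) ^ k).mulVecLin ≤
      LinearMap.ker ((W * B) ^ (k + 1)).mulVecLin := by
    intro v hv
    simp only [LinearMap.mem_ker, mulVecLin_apply] at hv ⊢
    rw [pow_succ', ← mulVec_mulVec, hv, mulVec_zero]
  have hrk : ((W * B) ^ k).rank = ((W * B) ^ (k + 1)).rank := rank_pow_index (W * B) hk
  have hkEq : LinearMap.ker ((W * B) ^ k).mulVecLin =
      LinearMap.ker ((W * B) ^ (k + 1)).mulVecLin := ker_eq_of_le_of_rank_eq hk1 hrk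
  have hrC : (W * Z).rank = ((W * B) ^ k).rank := by
    refine le_antisymm ((Matrix.rank_mul_le_right W Z).trans hZ2.le) ?_
    have := Matrix.rank_mul_le_right ((W * B) ^ (k + 1)) (W * Z)
    rwa [F0] at this
  have hCk : LinearMap.ker (W * Z).mulVecLin ≤ LinearMap.ker ((W * B) ^ k).mulVecLin := by
    intro v hv
    simp only [LinearMap.mem_ker, mulVecLin_apply] at hv ⊢
    rw [← F0, ← mulVec_mulVec, hv, mulVec_zero]
  have hCeq : LinearMap.ker (W * Z).mulVecLin = LinearMap.ker ((W * B) ^ k).mulVecLin :=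
    ker_eq_of_le_of_rank_eq hCk hrC
  have hZk : LinearMap.ker Z.mulVecLin ≤ LinearMap.ker ((W * B) ^ k).mulVecLin := by
    intro v hv
    simp only [LinearMap.mem_ker, mulVecLin_apply] at hv ⊢
    rw [← F0, ← mulVec_mulVec, ← mulVec_mulVec, hv, mulVec_zero, mulVec_zero]
  have hZeq : LinearMap.ker Z.mulVecLin = LinearMap.ker ((W * B) ^ k).mulVecLin :=
    ker_eq_of_le_of_rank_eq hZk hZ2
  -- transfer lemmas
  have T0 : ∀ (p : ℕ) (M : Matrix (Fin n) (Fin p) ℂ),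
      (W * B) ^ k * M = 0 → (W * Z) * M = 0 := fun p M hM =>
    mul_eq_zero_of_ker_le hCeq.ge M hM
  have TZ : ∀ (p : ℕ) (M : Matrix (Fin n) (Fin p) ℂ),
      (W * B) ^ (k + 1) * M = 0 → Z * M = 0 := fun p M hM =>
    mul_eq_zero_of_ker_le (le_of_eq (hkEq.symm.trans hZeq.symm)) M hM
  -- C A C = C
  have hCAC : W * Z * (W * B) * (W * Z) = W * Z := by
    have h0 : (W * B) ^ k * (W * B * (W * Z) - 1) = 0 := by
      rw [mul_sub, mul_one, ← Matrix.mul_assoc, ← pow_succ, F0, sub_self]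
    have h2 := T0 _ _ h0
    rw [mul_sub, mul_one, sub_eq_zero, ← Matrix.mul_assoc] at h2
    exact h2
  -- right-assoc rewrite rules
  have hH1' : B * (H * B) = B := by rw [← Matrix.mul_assoc]; exact hH1
  have hH2' : H * (B * H) = H := by rw [← Matrix.mul_assoc]; exact hH2
  have L1 : ∀ (p : ℕ) (X : Matrix (Fin n) (Fin p) ℂ), B * (H * (B * X)) = B * X := by
    intro p X
    rw [← Matrix.mul_assoc, ← Matrix.mul_assoc, hH1]
  have L2 : ∀ (p : ℕ) (X : Matrix (Fin n) (Fin p) ℂ),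
      W * (Z * (W * (B * (W * (Z * X))))) = W * (Z * X) := by
    intro p X
    simp only [← Matrix.mul_assoc] at hCAC ⊢
    rw [hCAC]
  have L3 : ∀ (p : ℕ) (X : Matrix (Fin n) (Fin p) ℂ),
      (W * B) ^ (k + 1) * (W * (Z * X)) = (W * B) ^ k * X := by
    intro p X
    have F0' := F0
    simp only [← Matrix.mul_assoc] at F0' ⊢
    rw [F0']
  have L4 : ∀ (p : ℕ) (X : Matrix (Fin n) (Fin p) ℂ),
      (W * B) ^ k * (W * (B * X)) = (W * B) ^ (k + 1) * X := by
    intro p X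
    rw [← Matrix.mul_assoc, ← Matrix.mul_assoc, Matrix.mul_assoc ((W * B) ^ k) W B, ← pow_succ]
  -- key computed identities for Y := W*Z*W*B*H
  have hYB : W * Z * W * B * H * B = W * Z * W * B := by
    simp only [Matrix.mul_assoc, hH1']
  have hAk1Y : (W * B) ^ (k + 1) * (W * Z * W * B * H) = (W * B) ^ (k + 1) * H := by
    simp only [Matrix.mul_assoc, L3, L4]
  have hZY : Z * (W * Z * W * B * H) = Z * H := by
    have hd : (W * B) ^ (k + 1) * (W * Z * W * B * H - H) = 0 := by
      rw [Matrix.mul_sub, hAk1Y, sub_self]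
    have h5 := TZ _ _ hd
    rwa [Matrix.mul_sub, sub_eq_zero] at h5
  tfae_have 1 → 2 := by
    rintro rfl
    refine ⟨?_, ?_, hYB, hAk1Y⟩
    · simp only [Matrix.mul_assoc, L1, L2]
    · simp only [Matrix.mul_assoc, hH1']
  tfae_have 2 → 1 := by
    rintro ⟨h1, h2, h3, h4⟩
    have h0 : (W * B) ^ k * (W * B * (Y₁ - H)) = 0 := by
      rw [← Matrix.mul_assoc, ← pow_succ, Matrix.mul_sub, h4, sub_self]
    have h5 := T0 _ _ h0
    rw [Matrix.mul_sub, Matrix.mul_sub, sub_eq_zero] at h5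
    calc Y₁ = Y₁ * B * Y₁ := h1.symm
      _ = W * Z * W * B * Y₁ := by rw [h3]
      _ = W * Z * W * B * H := by
          simp only [Matrix.mul_assoc] at h5 ⊢
          exact h5
  tfae_have 1 → 3 := by
    rintro rfl
    refine ⟨?_, hYB, ?_⟩
    · simp only [Matrix.mul_assoc, L1, L2]
    · simp only [Matrix.mul_assoc, hH1', hH2']
  tfae_have 3 → 1 := by
    rintro ⟨h1, h2, h3⟩
    have h3' : B * Y₁ = B * (W * Z * W * B) * H := by
      rw [h3, Matrix.mul_assoc B Y₁ B, h2]
    calc Y₁ = Y₁ * B * Y₁ := h1.symm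
      _ = W * Z * W * B * Y₁ := by rw [h2]
      _ = W * Z * W * (B * Y₁) := by rw [Matrix.mul_assoc]
      _ = W * Z * W * (B * (W * Z * W * B) * H) := by rw [h3']
      _ = W * Z * W * B * H := by simp only [Matrix.mul_assoc, L2]
  tfae_have 1 → 4 := by
    rintro rfl
    refine ⟨hYB, ?_, ?_⟩
    · simp only [Matrix.mul_assoc, hH1', hH2']
    · simp only [Matrix.mul_assoc, hH2']
  tfae_have 4 → 1 := by
    rintro ⟨h1, h2, h3⟩
    calc Y₁ = Y₁ * B * H := h3
      _ = W * Z * W * B * H := by rw [h1]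
  tfae_have 1 → 5 := by
    rintro rfl
    refine ⟨?_, hYB, hAk1Y, hZY⟩
    simp only [Matrix.mul_assoc, L1, L2]
  tfae_have 5 → 1 := by
    rintro ⟨h1, h2, h3, h4⟩
    have h0 : (W * B) ^ k * (W * B * (Y₁ - H)) = 0 := by
      rw [← Matrix.mul_assoc, ← pow_succ, Matrix.mul_sub, h3, sub_self]
    have h5 := T0 _ _ h0
    rw [Matrix.mul_sub, Matrix.mul_sub, sub_eq_zero] at h5
    calc Y₁ = Y₁ * B * Y₁ := h1.symm
      _ = W * Z * W * B * Y₁ := by rw [h2]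
      _ = W * Z * W * B * H := by
          simp only [Matrix.mul_assoc] at h5 ⊢
          exact h5
  tfae_have 1 → 6 := by
    rintro rfl
    refine ⟨?_, hYB, ?_⟩
    · simp only [Matrix.mul_assoc, hH2']
    · rw [Matrix.mul_assoc, hZY, ← Matrix.mul_assoc]
  tfae_have 6 → 1 := by
    rintro ⟨h1, h2, h3⟩
    calc Y₁ = Y₁ * B * H := h1
      _ = W * Z * W * B * H := by rw [h2]
  tfae_finish
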